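/- Let 𝒳 be compactly contained in ℝ^𝖽 with diameter D > 0 and metric d induced by a vector norm. Suppose (P,Q) ∈ 𝒯(γ,C,D) with minorizing measure ν^P satisfying P^{m_P}(x,·) ≥ ε_P ν^P(·) for all x ∈ 𝒳 (ε_P ∈ (0,1)), witnessing set 𝒳_Q, and let π^P, π^Q be invariant distributions of P and Q. Then the distribution pair (π^P, π^Q) has transfer exponent γ with constant C ε_P and radius D, i.e., C ε_P (h/D)^γ π^Q(B(x,h)) ≤ π^P(B(x,h)) for all x ∈ 𝒳_Q and all h ≤ D. -/

import Mathlib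

open MeasureTheory ProbabilityTheory
open scoped ENNReal

/-- `m`-step iterate `P^m` of a Markov kernel. -/
noncomputable def kernelIter {X : Type*} [MeasurableSpace X] (P : Kernel X X) : ℕ → Kernel X X
  | 0 => Kernel.id
  | n + 1 => Kernel.comp (kernelIter P n) P

/-- Support of a measure on a metric space: `y ∈ supp μ` iff every closed ball
around `y` has positive measure. -/
def msupport {X : Type*} [PseudoMetricSpace X] [MeasurableSpace X] (μ : Measure X) : Set X :=
  {y | ∀ r : ℝ, 0 < r → 0 < μ (Metric.closedBall y r)}

lemma bind_kernelIter {X : Type*} [MeasurableSpace X] (K : Kernel X X)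
    (μ : Measure X) (hinv : μ.bind (fun x => K x) = μ) :
    ∀ m : ℕ, μ.bind (fun x => kernelIter K m x) = μ := by
  intro m
  induction m with
  | zero => simp [kernelIter, Kernel.id_apply, Measure.bind_dirac]
  | succ n ih =>
    have h1 : ∀ x, kernelIter K (n+1) x = (K x).bind (kernelIter K n) := fun x =>
      Kernel.comp_apply _ _ _
    calc μ.bind (fun x => kernelIter K (n+1) x)
        = μ.bind (fun x => (K x).bind (kernelIter K n)) := by simp only [h1]
      _ = (μ.bind (fun x => K x)).bind (fun x => kernelIter K n x) :=
          (Measure.bind_bind (Kernel.measurable K).aemeasurable (Kernel.measurable _).aemeasurable).symm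
      _ = μ := by rw [hinv, ih]

/-- If `(P,Q) ∈ 𝒯(γ,C,D)` (kernel transfer exponent `γ` with constant `C` and
radius `D = diam 𝒳`, witnessed by a minorizing measure `ν^P` with `P^{m_P} ≥ ε_P ν^P`,
and a closed set `𝒳_Q` carrying all `Q^{m_Q}(x,·)`), then the invariant
distributions satisfy `C ε_P (h/D)^γ π^Q(B(x,h)) ≤ π^P(B(x,h))` for all
`x ∈ 𝒳_Q` and `0 < h ≤ D`, i.e. `(π^P,π^Q)` has transfer exponent `γ` with
constant `C ε_P` and radius `D`. -/
theorem kernel_transfer_exponent_implies_distribution_transfer_exponent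
    {E : Type*} [NormedAddCommGroup E] [NormedSpace ℝ E] [FiniteDimensional ℝ E]
    [MeasurableSpace E] [BorelSpace E]
    (dd : ℕ) (hdim : Module.finrank ℝ E = dd)
    -- the state space `𝒳 ⋐ ℝ^𝖽` with diameter `D > 0`
    (X : Set E) (hXcpt : IsCompact X) (D : ℝ) (hD : 0 < D) (hdiam : Metric.diam X = D)
    (P Q : Kernel X X) [IsMarkovKernel P] [IsMarkovKernel Q]
    (πP πQ : Measure X) [IsProbabilityMeasure πP] [IsProbabilityMeasure πQ]
    -- `π^P`, `π^Q` are invariant for `P`, `Q`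
    (hinvP : πP.bind (fun x => P x) = πP)
    (hinvQ : πQ.bind (fun x => Q x) = πQ)
    -- kernel transfer exponent data: `(P,Q) ∈ 𝒯(γ,C,D)`
    (γ : ℝ) (hγ : 0 ≤ γ) (C : ℝ) (hC : 0 < C)
    (mP : ℕ) (hmP : 1 ≤ mP) (εP : ℝ) (hεP0 : 0 < εP) (hεP1 : εP < 1)
    (νP : Measure X) [IsProbabilityMeasure νP]
    -- `ν^P` is a minorizing measure: `P^{m_P}(x,·) ≥ ε_P ν^P`
    (hminor : ∀ x : X, ∀ A : Set X, MeasurableSet A →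
      ENNReal.ofReal εP * νP A ≤ kernelIter P mP x A)
    (mQ : ℕ) (hmQ : 1 ≤ mQ)
    (XQ : Set X) (hXQclosed : IsClosed XQ)
    -- `supp Q^{m_Q}(x,·) ⊆ 𝒳_Q` for all `x ∈ 𝒳`
    (hQsupp : ∀ x : X, msupport (kernelIter Q mQ x) ⊆ XQ)
    -- `ν^P(B(x,h)) ≥ C (h/D)^γ Q^{m_Q}(y, B(x,h))` for `x, y ∈ 𝒳_Q`, `0 < h ≤ D`
    (htransfer : ∀ x ∈ XQ, ∀ y ∈ XQ, ∀ h : ℝ, 0 < h → h ≤ D →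
      ENNReal.ofReal (C * (h / D) ^ γ) * kernelIter Q mQ y (Metric.closedBall x h) ≤
        νP (Metric.closedBall x h)) :
    ∀ x ∈ XQ, ∀ h : ℝ, 0 < h → h ≤ D →
      ENNReal.ofReal (C * εP * (h / D) ^ γ) * πQ (Metric.closedBall x h) ≤
        πP (Metric.closedBall x h) := by

  intro x hx h hh0 hhD
  set B := Metric.closedBall x h with hB
  have hBmeas : MeasurableSet B := measurableSet_closedBall
  have hpow : (0:ℝ) ≤ (h / D) ^ γ := Real.rpow_nonneg (div_nonneg hh0.le hD.le) γ
  -- lower bound for πP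
  have hπP : ENNReal.ofReal εP * νP B ≤ πP B := by
    have hbind := bind_kernelIter P πP hinvP mP
    calc ENNReal.ofReal εP * νP B
        = ∫⁻ y, ENNReal.ofReal εP * νP B ∂πP := by
          rw [lintegral_const, measure_univ, mul_one]
      _ ≤ ∫⁻ y, kernelIter P mP y B ∂πP :=
          lintegral_mono fun y => hminor y B hBmeas
      _ = πP B := by
          conv_rhs => rw [← hbind]
          rw [Measure.bind_apply hBmeas (Kernel.measurable _).aemeasurable]
  -- kernelIter Q mQ y vanishes outside XQ
  have hnull : ∀ y : X, kernelIter Q mQ y XQᶜ = 0 := by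
    intro y
    apply measure_null_of_locally_null
    intro z hz
    have hz' : z ∉ msupport (kernelIter Q mQ y) := fun hm => hz (hQsupp y hm)
    simp only [msupport, Set.mem_setOf_eq] at hz'
    push_neg at hz'
    obtain ⟨r, hr0, hr⟩ := hz'
    exact ⟨Metric.closedBall z r,
      mem_nhdsWithin_of_mem_nhds (Metric.closedBall_mem_nhds z hr0), le_antisymm hr (zero_le)⟩
  -- πQ is carried by XQ
  have hπQnull : πQ XQᶜ = 0 := by
    conv_lhs => rw [← bind_kernelIter Q πQ hinvQ mQ]
    rw [Measure.bind_apply hXQclosed.measurableSet.compl (Kernel.measurable _).aemeasurable]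
    simp [hnull]
  have hae : ∀ᵐ y ∂πQ, y ∈ XQ := by
    rw [MeasureTheory.ae_iff]
    exact hπQnull
  -- upper bound for πQ
  have hπQ : ENNReal.ofReal (C * (h / D) ^ γ) * πQ B ≤ νP B := by
    have hbind := bind_kernelIter Q πQ hinvQ mQ
    calc ENNReal.ofReal (C * (h / D) ^ γ) * πQ B
        = ENNReal.ofReal (C * (h / D) ^ γ) * ∫⁻ y, kernelIter Q mQ y B ∂πQ := by
          conv_lhs => rw [← hbind]
          rw [Measure.bind_apply hBmeas (Kernel.measurable _).aemeasurable]
      _ = ∫⁻ y, ENNReal.ofReal (C * (h / D) ^ γ) * kernelIter Q mQ y B ∂πQ :=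
          (lintegral_const_mul _ (Kernel.measurable_coe _ hBmeas)).symm
      _ ≤ ∫⁻ y, νP B ∂πQ := by
          refine lintegral_mono_ae (hae.mono fun y hy => ?_)
          exact htransfer x hx y hy h hh0 hhD
      _ = νP B := by rw [lintegral_const, measure_univ, mul_one]
  have hsplit : ENNReal.ofReal (C * εP * (h / D) ^ γ)
      = ENNReal.ofReal εP * ENNReal.ofReal (C * (h / D) ^ γ) := by
    rw [← ENNReal.ofReal_mul hεP0.le]
    ring_nf
  calc ENNReal.ofReal (C * εP * (h / D) ^ γ) * πQ B
      = ENNReal.ofReal εP * (ENNReal.ofReal (C * (h / D) ^ γ) * πQ B) := by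
        rw [hsplit, mul_assoc]
    _ ≤ ENNReal.ofReal εP * νP B := mul_le_mul_right hπQ _
    _ ≤ πP B := hπP
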